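/- arXiv:2509.14193 — 3 statements merged into one kernel-verified Lean document; each statement's English description precedes it below -/
import Mathlib

section
/- An unsigned graph 𝒢 is the Gremban expansion of some signed graph if and only if it admits a fixed-point-free involutive automorphism η such that for every edge (u,v) of 𝒢 one has v ≠ η(u) and (u, η(v)) is not an edge of 𝒢. -/
/-- A signed graph: a simple graph together with a symmetric `±1`-valued sign function
on its edges. -/
structure SignedGraph (V : Type*) where
  G : SimpleGraph V
  sign : V → V → ℤ
  sign_symm : ∀ u v, sign u v = sign v u
  sign_pm : ∀ u v, G.Adj u v → sign u v = 1 ∨ sign u v = -1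

namespace SignedGraph

variable {V : Type*} (S : SignedGraph V)

/-- The Gremban expansion of a signed graph: each vertex `v` is doubled into the two
polarities `(v, true)` (positive) and `(v, false)` (negative); a positive edge lifts to
two edges between equal polarities, and a negative edge to two edges between opposite
polarities. -/
def gremban : SimpleGraph (V × Bool) where
  Adj x y := S.G.Adj x.1 y.1 ∧ ((x.2 = y.2) ↔ S.sign x.1 y.1 = 1)
  symm := by
    constructor
    rintro ⟨u, a⟩ ⟨v, b⟩ ⟨h, hs⟩
    refine ⟨h.symm, ?_⟩
    rw [S.sign_symm v u, eq_comm]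
    exact hs
  loopless := by
    constructor
    rintro ⟨u, a⟩ ⟨h, _⟩
    exact S.G.loopless.irrefl u h

/-- The Gremban involution, swapping the two polarities of every vertex. -/
def eta : V × Bool → V × Bool := fun x => (x.1, !x.2)

end SignedGraph

open SignedGraph

/-- The setoid identifying `x` with `η x`, for an involution `η`. -/
def grSetoid {W : Type} (η : W → W) (hinv : ∀ x, η (η x) = x) : Setoid W where
  r x y := y = x ∨ y = η x
  iseqv := by
    constructor
    · intro x; exact Or.inl rfl
    · rintro x y (rfl | rfl)
      · exact Or.inl rfl
      · right; rw [hinv]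
    · rintro x y z (rfl | rfl) (rfl | rfl)
      · exact Or.inl rfl
      · exact Or.inr rfl
      · exact Or.inr rfl
      · left; rw [hinv]

/-- An unsigned graph `𝒢` is the Gremban expansion of some signed graph if and only if it
admits a fixed-point-free involutive automorphism `η` such that for every edge `(u,v)`
one has `v ≠ η(u)` and `(u, η(v))` is not an edge. -/
theorem gremban_characterization {W : Type} (𝒢 : SimpleGraph W) :
    (∃ (V : Type) (S : SignedGraph V), Nonempty (𝒢 ≃g S.gremban)) ↔
    ∃ η : W → W,
      Function.Bijective η ∧
      (∀ x y : W, 𝒢.Adj (η x) (η y) ↔ 𝒢.Adj x y) ∧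
      (∀ x : W, η (η x) = x) ∧
      (∀ x : W, η x ≠ x) ∧
      (∀ u v : W, 𝒢.Adj u v → v ≠ η u ∧ ¬𝒢.Adj u (η v)) := by
  classical
  constructor
  · rintro ⟨V, S, ⟨e⟩⟩
    have heta : ∀ a b : V × Bool,
        S.gremban.Adj (eta a) (eta b) ↔ S.gremban.Adj a b := by
      rintro ⟨p, a⟩ ⟨q, b⟩
      simp [SignedGraph.gremban, SignedGraph.eta]
    refine ⟨fun x => e.symm (eta (e x)), ?_, ?_, ?_, ?_, ?_⟩
    · have hetab : Function.Bijective (eta : V × Bool → V × Bool) :=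
        Function.Involutive.bijective (by rintro ⟨p, a⟩; simp [SignedGraph.eta])
      exact (e.symm.toEquiv.bijective.comp hetab).comp e.toEquiv.bijective
    · intro x y
      rw [e.symm.map_rel_iff, heta, e.map_rel_iff]
    · intro x
      simp [SignedGraph.eta]
    · intro x h
      apply_fun e at h
      rw [e.apply_symm_apply] at h
      have h2 := congrArg Prod.snd h
      simp [SignedGraph.eta] at h2
    · intro u v huv
      have h1 : S.gremban.Adj (e u) (e v) := e.map_rel_iff.mpr huv
      constructor
      · intro hv
        rw [hv] at huv
        have h2 : S.gremban.Adj (e u) (eta (e u)) := by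
          have := e.map_rel_iff.mpr huv
          rwa [e.apply_symm_apply] at this
        exact S.G.loopless.irrefl (e u).1 h2.1
      · intro hadj2
        have h2 : S.gremban.Adj (e u) (eta (e v)) := by
          have := e.map_rel_iff.mpr hadj2
          rwa [e.apply_symm_apply] at this
        obtain ⟨hA1, hb1⟩ := h1
        obtain ⟨hA2, hb2⟩ := h2
        simp only [SignedGraph.eta] at hA2 hb2
        have hcontr := hb1.trans hb2.symm
        revert hcontr
        cases (e u).2 <;> cases (e v).2 <;> simp
  · rintro ⟨η, hbij, haut, hinv, hfpf, hedge⟩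
    have haut' : ∀ a b, 𝒢.Adj (η a) b ↔ 𝒢.Adj a (η b) := by
      intro a b
      conv_lhs => rw [← hinv b]
      exact haut a (η b)
    set s := grSetoid η hinv with hs
    have hmkη : ∀ x : W, Quotient.mk s (η x) = Quotient.mk s x := by
      intro x
      exact Quotient.sound (show x = η x ∨ x = η (η x) from Or.inr (hinv x).symm)
    have hout : ∀ x : W,
        x = (Quotient.mk s x).out ∨ (Quotient.mk s x).out = η x := by
      intro x
      have h : x = (Quotient.mk s x).out ∨ x = η (Quotient.mk s x).out :=
        @Quotient.mk_out W s x
      rcases h with h | h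
      · exact Or.inl h
      · exact Or.inr ((congrArg η h).trans (hinv _)).symm
    have hpol : ∀ x : W,
        decide (η x = (Quotient.mk s (η x)).out) = !decide (x = (Quotient.mk s x).out) := by
      intro x
      rw [hmkη x]
      rcases hout x with hx | hx
      · rw [← hx]
        simp [hfpf x]
      · rw [hx]
        simp [(hfpf x).symm]
    have hbijφ : Function.Bijective
        (fun x : W => ((Quotient.mk s x, decide (x = (Quotient.mk s x).out)) :
          Quotient s × Bool)) := by
      constructor
      · intro x y hxy
        have h1 : Quotient.mk s x = Quotient.mk s y := congrArg Prod.fst hxy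
        have h2 : decide (x = (Quotient.mk s x).out) = decide (y = (Quotient.mk s y).out) :=
          congrArg Prod.snd hxy
        have h3 : y = x ∨ y = η x := Quotient.exact h1
        rcases h3 with rfl | rfl
        · rfl
        · rw [hpol x] at h2
          simp at h2
      · rintro ⟨c, b⟩
        cases b
        · refine ⟨η c.out, ?_⟩
          refine Prod.ext ((hmkη c.out).trans (Quotient.out_eq c)) ?_
          simp only [hpol c.out, Quotient.out_eq]
          simp
        · refine ⟨c.out, ?_⟩
          refine Prod.ext (Quotient.out_eq c) ?_
          simp [Quotient.out_eq]
    have hsign : ∀ (P : Prop) [inst : Decidable P], ((if P then (1:ℤ) else -1) = 1) ↔ P := by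
      intro P inst
      split_ifs with h <;> simp [h]
    refine ⟨Quotient s,
      { G := { Adj := fun c d => 𝒢.Adj c.out d.out ∨ 𝒢.Adj c.out (η d.out)
               symm := by
                 constructor
                 rintro c d (h | h)
                 · exact Or.inl h.symm
                 · exact Or.inr ((haut' c.out d.out).mpr h).symm
               loopless := by
                 constructor
                 rintro c (h | h)
                 · exact 𝒢.loopless.irrefl _ h
                 · exact (hedge c.out (η c.out) h).1 rfl }
        sign := fun c d => if 𝒢.Adj c.out d.out then 1 else -1
        sign_symm := by
          intro c d
          by_cases h : 𝒢.Adj c.out d.out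
          · rw [if_pos h, if_pos h.symm]
          · rw [if_neg h, if_neg (fun h2 => h h2.symm)]
        sign_pm := by
          intro c d _
          by_cases h : 𝒢.Adj c.out d.out
          · exact Or.inl (if_pos h)
          · exact Or.inr (if_neg h) },
      ⟨⟨Equiv.ofBijective _ hbijφ, ?_⟩⟩⟩
    intro x y
    show (𝒢.Adj (Quotient.mk s x).out (Quotient.mk s y).out ∨
            𝒢.Adj (Quotient.mk s x).out (η (Quotient.mk s y).out)) ∧
          (decide (x = (Quotient.mk s x).out) = decide (y = (Quotient.mk s y).out) ↔
            (if 𝒢.Adj (Quotient.mk s x).out (Quotient.mk s y).out then (1:ℤ) else -1) = 1)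
          ↔ 𝒢.Adj x y
    rw [decide_eq_decide, hsign]
    rcases hout x with hx | hx
    · rcases hout y with hy | hy
      · rw [← hx, ← hy]
        constructor
        · rintro ⟨_, h2⟩
          exact h2.mp (by tauto)
        · intro h
          exact ⟨Or.inl h, by simp [h]⟩
      · rw [← hx, hy, hinv]
        have hyne : ¬ (y = η y) := fun h => hfpf y h.symm
        constructor
        · rintro ⟨h1, h2⟩
          rcases h1 with h1 | h1
          · exact absurd ((h2.mpr h1).mp rfl) hyne
          · exact h1
        · intro h
          refine ⟨Or.inr h, ?_, ?_⟩
          · intro h3; exact absurd (h3.mp rfl) hyne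
          · intro h3; exact absurd h3 (hedge x y h).2
    · rcases hout y with hy | hy
      · rw [hx, ← hy]
        have hxne : ¬ (x = η x) := fun h => hfpf x h.symm
        constructor
        · rintro ⟨h1, h2⟩
          rcases h1 with h1 | h1
          · exact absurd ((h2.mpr h1).mpr rfl) hxne
          · exact (haut x y).mp h1
        · intro h
          refine ⟨Or.inr ((haut x y).mpr h), ?_, ?_⟩
          · intro h3; exact absurd (h3.mpr rfl) hxne
          · intro h3
            exact absurd ((haut' x y).mp h3) (hedge x y h).2
      · rw [hx, hy, hinv]
        have hxne : ¬ (x = η x) := fun h => hfpf x h.symm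
        have hyne : ¬ (y = η y) := fun h => hfpf y h.symm
        constructor
        · rintro ⟨h1, h2⟩
          exact (haut x y).mp (h2.mp (iff_of_false hxne hyne))
        · intro h
          exact ⟨Or.inl ((haut x y).mpr h),
            iff_of_true (iff_of_false hxne hyne) ((haut x y).mpr h)⟩
end

section
/- Let G be a connected signed graph with Gremban expansion 𝒢 and let V(𝒢) = 𝒰₁ ∪ 𝒰₂ be a Gremban-symmetric bipartition. Then the cut-set C(𝒰₁, 𝒰₂) is Gremban-symmetric; if η interchanges 𝒰₁ and 𝒰₂ then π(C(𝒰₁,𝒰₂)) is a frustration set of G, and if η fixes both 𝒰₁ and 𝒰₂ then π(C(𝒰₁,𝒰₂)) is a cut-set of G. Conversely, every cut-set and every frustration set of G lifts to a Gremban-symmetric cut-set of 𝒢, and this correspondence is a bijection. -/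
open SignedGraph

/-- The set of edges of `G` with one endpoint in `A` and the other in `B`. -/
def cutEdges {V : Type*} (G : SimpleGraph V) (A B : Set V) : Set (Sym2 V) :=
  {e | e ∈ G.edgeSet ∧ ∃ u v, e = s(u, v) ∧ u ∈ A ∧ v ∈ B}

/-- The edge connectivity of a graph: the minimum size of a cut-set over all
bipartitions of the vertex set into two nonempty parts. -/
noncomputable def edgeConn {V : Type*} (G : SimpleGraph V) : ℕ :=
  sInf {n | ∃ A : Set V, A.Nonempty ∧ Aᶜ.Nonempty ∧ (cutEdges G A Aᶜ).ncard = n}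

/-- The frustration set of a switching function `θ`: the edges that are negative after
switching by `θ`. -/
def frustEdges {V : Type*} (S : SignedGraph V) (θ : V → ℤ) : Set (Sym2 V) :=
  {e | e ∈ S.G.edgeSet ∧ ∃ u v, e = s(u, v) ∧ θ u * θ v * S.sign u v = -1}

/-- The frustration index of a signed graph: the minimum size of a frustration set over
all switching functions `θ : V → {±1}`. -/
noncomputable def frustIndex {V : Type*} (S : SignedGraph V) : ℕ :=
  sInf {n | ∃ θ : V → ℤ, (∀ v, θ v = 1 ∨ θ v = -1) ∧ (frustEdges S θ).ncard = n}

/-- A Gremban-symmetric bipartition of the vertex set of the Gremban expansion: two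
nonempty, disjoint, covering parts, each mapped onto a part by the Gremban involution. -/
def GrembanSymPartition {V : Type*} (U₁ U₂ : Set (V × Bool)) : Prop :=
  U₁.Nonempty ∧ U₂.Nonempty ∧ Disjoint U₁ U₂ ∧ U₁ ∪ U₂ = Set.univ ∧
    ((eta '' U₁ = U₁ ∧ eta '' U₂ = U₂) ∨ (eta '' U₁ = U₂ ∧ eta '' U₂ = U₁))

/-- `F` is a cut-set of the signed graph `G`: the set of edges between the two parts of
some bipartition of `V(G)` into nonempty parts. -/
def IsCutSet {V : Type*} (S : SignedGraph V) (F : Set (Sym2 V)) : Prop :=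
  ∃ A : Set V, A.Nonempty ∧ Aᶜ.Nonempty ∧ F = cutEdges S.G A Aᶜ

/-- `F` is a frustration set of the signed graph `G`: the set of edges that become
negative after some switching. -/
def IsFrustSet {V : Type*} (S : SignedGraph V) (F : Set (Sym2 V)) : Prop :=
  ∃ θ : V → ℤ, (∀ v, θ v = 1 ∨ θ v = -1) ∧ F = frustEdges S θ

/-- The collection of Gremban-symmetric cut-sets of the Gremban expansion, i.e. cut-sets
of Gremban-symmetric bipartitions. -/
def symCutSets {V : Type*} (S : SignedGraph V) : Set (Set (Sym2 (V × Bool))) :=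
  {C | ∃ U₁ U₂ : Set (V × Bool), GrembanSymPartition U₁ U₂ ∧
    C = cutEdges S.gremban U₁ U₂}

section Helpers

variable {V : Type*}

lemma eta_eta (x : V × Bool) : eta (eta x) = x := by
  simp [eta]

lemma eta_invol : Function.Involutive (eta : V × Bool → V × Bool) := eta_eta

lemma himg (U : Set (V × Bool)) (x : V × Bool) : x ∈ eta '' U ↔ eta x ∈ U := by
  constructor
  · rintro ⟨y, hy, rfl⟩; rwa [eta_eta]
  · intro hx; exact ⟨eta x, hx, eta_eta x⟩

lemma gremban_adj (S : SignedGraph V) {u v : V} {a b : Bool} :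
    S.gremban.Adj (u, a) (v, b) ↔ S.G.Adj u v ∧ ((a = b) ↔ S.sign u v = 1) :=
  Iff.rfl

lemma adj_eta (S : SignedGraph V) (x y : V × Bool) :
    S.gremban.Adj (eta x) (eta y) ↔ S.gremban.Adj x y := by
  obtain ⟨u, a⟩ := x; obtain ⟨v, b⟩ := y
  simp only [eta, gremban_adj]
  constructor <;> rintro ⟨h1, h2⟩ <;> refine ⟨h1, ?_⟩ <;>
    rw [← h2] <;> cases a <;> cases b <;> simp

lemma mem_cutEdges {G : SimpleGraph V} {A B : Set V} {e : Sym2 V} :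
    e ∈ cutEdges G A B ↔ ∃ u v, G.Adj u v ∧ e = s(u, v) ∧ u ∈ A ∧ v ∈ B := by
  constructor
  · rintro ⟨he, u, v, rfl, hu, hv⟩
    exact ⟨u, v, (SimpleGraph.mem_edgeSet _).mp he, rfl, hu, hv⟩
  · rintro ⟨u, v, hadj, rfl, hu, hv⟩
    exact ⟨(SimpleGraph.mem_edgeSet _).mpr hadj, u, v, rfl, hu, hv⟩

lemma cutEdges_comm (G : SimpleGraph V) (A B : Set V) :
    cutEdges G A B = cutEdges G B A := by
  have key : ∀ A B : Set V, cutEdges G A B ⊆ cutEdges G B A := by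
    intro A B e he
    rw [mem_cutEdges] at he ⊢
    obtain ⟨u, v, hadj, rfl, hu, hv⟩ := he
    exact ⟨v, u, hadj.symm, Sym2.eq_swap, hv, hu⟩
  exact Set.Subset.antisymm (key A B) (key B A)

lemma map_eta_cutEdges (S : SignedGraph V) (A B : Set (V × Bool)) :
    Sym2.map eta '' cutEdges S.gremban A B = cutEdges S.gremban (eta '' A) (eta '' B) := by
  ext e
  constructor
  · rintro ⟨e₀, h0, rfl⟩
    rw [mem_cutEdges] at h0
    obtain ⟨x, y, hadj, rfl, hx, hy⟩ := h0
    exact mem_cutEdges.mpr ⟨eta x, eta y, (adj_eta S x y).mpr hadj, by simp,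
      Set.mem_image_of_mem _ hx, Set.mem_image_of_mem _ hy⟩
  · intro h0
    obtain ⟨x', y', hadj, rfl, ⟨x, hx, rfl⟩, ⟨y, hy, rfl⟩⟩ := mem_cutEdges.mp h0
    refine ⟨s(x, y), mem_cutEdges.mpr ⟨x, y, ?_, rfl, hx, hy⟩, by simp⟩
    rwa [adj_eta] at hadj

lemma part_eta (S : SignedGraph V) {U₁ U₂ : Set (V × Bool)} (h : GrembanSymPartition U₁ U₂) :
    Sym2.map eta '' cutEdges S.gremban U₁ U₂ = cutEdges S.gremban U₁ U₂ := by
  obtain ⟨-, -, -, -, hsym | hsym⟩ := h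
  · rw [map_eta_cutEdges, hsym.1, hsym.2]
  · rw [map_eta_cutEdges, hsym.1, hsym.2, cutEdges_comm]

lemma hU2_of_part {U₁ U₂ : Set (V × Bool)} (h : GrembanSymPartition U₁ U₂) :
    ∀ x, x ∈ U₂ ↔ x ∉ U₁ := by
  obtain ⟨-, -, hdisj, huniv, -⟩ := h
  intro x
  constructor
  · intro h2 h1; exact Set.disjoint_left.mp hdisj h1 h2
  · intro h1
    have hx : x ∈ U₁ ∪ U₂ := huniv ▸ Set.mem_univ x
    exact hx.resolve_left h1

lemma mem_iff_eta_mem {U W : Set (V × Bool)} (h : eta '' U = W) (x : V × Bool) :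
    x ∈ U ↔ eta x ∈ W := by
  subst h
  constructor
  · exact Set.mem_image_of_mem _
  · rintro ⟨y, hy, hxy⟩
    exact eta_invol.injective hxy ▸ hy

lemma proj_cut_swap (S : SignedGraph V) {U₁ U₂ : Set (V × Bool)} {θ : V → ℤ}
    (hθ : ∀ v, θ v = 1 ∨ θ v = -1)
    (hmem : ∀ v (a : Bool), (v, a) ∈ U₁ ↔ θ v = (if a then 1 else -1))
    (hU2 : ∀ x, x ∈ U₂ ↔ x ∉ U₁) :
    Sym2.map Prod.fst '' cutEdges S.gremban U₁ U₂ = frustEdges S θ := by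
  ext e
  constructor
  · rintro ⟨e₀, h0, rfl⟩
    obtain ⟨⟨u, a⟩, ⟨v, b⟩, hadj, rfl, hx, hy⟩ := mem_cutEdges.mp h0
    obtain ⟨hG, hs⟩ := hadj
    refine ⟨(SimpleGraph.mem_edgeSet _).mpr hG, u, v, by simp, ?_⟩
    rw [hmem] at hx
    rw [hU2, hmem] at hy
    rcases S.sign_pm u v hG with h1 | h1 <;> rcases hθ v with h2 | h2 <;>
      rw [h1] <;> rw [h1] at hs <;> cases a <;> cases b <;> simp_all
  · rintro ⟨he, u, v, rfl, hcond⟩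
    have hG : S.G.Adj u v := (SimpleGraph.mem_edgeSet _).mp he
    obtain ⟨a, ha⟩ : ∃ a : Bool, θ u = (if a then 1 else -1) := by
      rcases hθ u with h | h
      exacts [⟨true, by simp [h]⟩, ⟨false, by simp [h]⟩]
    obtain ⟨b, hb⟩ : ∃ b : Bool, θ v = (if b then 1 else -1) := by
      rcases hθ v with h | h
      exacts [⟨true, by simp [h]⟩, ⟨false, by simp [h]⟩]
    refine ⟨s((u, a), (v, !b)),
      mem_cutEdges.mpr ⟨(u, a), (v, !b), ⟨hG, ?_⟩, rfl, (hmem u a).mpr ha, ?_⟩, by simp⟩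
    · rcases S.sign_pm u v hG with h1 | h1 <;> rw [h1] at hcond ⊢ <;>
        rw [ha, hb] at hcond <;> cases a <;> cases b <;> simp_all
    · rw [hU2, hmem]
      cases b <;> simp_all

lemma proj_cut_fix (S : SignedGraph V) {U₁ U₂ : Set (V × Bool)} {A : Set V}
    (hmem : ∀ v (a : Bool), (v, a) ∈ U₁ ↔ v ∈ A)
    (hU2 : ∀ x, x ∈ U₂ ↔ x ∉ U₁) :
    Sym2.map Prod.fst '' cutEdges S.gremban U₁ U₂ = cutEdges S.G A Aᶜ := by
  ext e
  constructor
  · rintro ⟨e₀, h0, rfl⟩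
    obtain ⟨⟨u, a⟩, ⟨v, b⟩, hadj, rfl, hx, hy⟩ := mem_cutEdges.mp h0
    refine mem_cutEdges.mpr ⟨u, v, hadj.1, by simp, (hmem u a).mp hx, ?_⟩
    intro hvA
    exact (hU2 _).mp hy ((hmem v b).mpr hvA)
  · intro he
    obtain ⟨u, v, hG, rfl, hu, hv⟩ := mem_cutEdges.mp he
    rcases S.sign_pm u v hG with h1 | h1
    · exact ⟨s((u, true), (v, true)), mem_cutEdges.mpr ⟨_, _, ⟨hG, by simp [h1]⟩, rfl,
        (hmem u true).mpr hu, (hU2 _).mpr fun h => hv ((hmem v true).mp h)⟩, by simp⟩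
    · exact ⟨s((u, true), (v, false)), mem_cutEdges.mpr ⟨_, _, ⟨hG, by simp [h1]⟩, rfl,
        (hmem u true).mpr hu, (hU2 _).mpr fun h => hv ((hmem v false).mp h)⟩, by simp⟩

lemma frust_of_swap (S : SignedGraph V) {U₁ U₂ : Set (V × Bool)}
    (h : GrembanSymPartition U₁ U₂) (h1 : eta '' U₁ = U₂) :
    IsFrustSet S (Sym2.map Prod.fst '' cutEdges S.gremban U₁ U₂) := by
  classical
  have hU2 := hU2_of_part h
  set θ : V → ℤ := fun v => if (v, true) ∈ U₁ then 1 else -1 with hθdef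
  have hθ : ∀ v, θ v = 1 ∨ θ v = -1 := fun v => by
    by_cases hv : (v, true) ∈ U₁ <;> simp [hθdef, hv]
  have hkey : ∀ x, x ∈ U₁ ↔ eta x ∈ U₂ := mem_iff_eta_mem h1
  have hmem : ∀ v (a : Bool), (v, a) ∈ U₁ ↔ θ v = (if a then 1 else -1) := by
    intro v a
    cases a
    · rw [hkey]
      have he : eta (v, false) = (v, true) := rfl
      rw [he, hU2]
      by_cases hv : (v, true) ∈ U₁ <;> simp [hθdef, hv]
    · by_cases hv : (v, true) ∈ U₁ <;> simp [hθdef, hv]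
  exact ⟨θ, hθ, (proj_cut_swap S hθ hmem hU2)⟩

lemma cut_of_fix (S : SignedGraph V) {U₁ U₂ : Set (V × Bool)}
    (h : GrembanSymPartition U₁ U₂) (h1 : eta '' U₁ = U₁) :
    IsCutSet S (Sym2.map Prod.fst '' cutEdges S.gremban U₁ U₂) := by
  have hU2 := hU2_of_part h
  have hkey : ∀ x, x ∈ U₁ ↔ eta x ∈ U₁ := mem_iff_eta_mem h1
  have hmem : ∀ v (a : Bool), (v, a) ∈ U₁ ↔ v ∈ {w | (w, true) ∈ U₁} := by
    intro v a
    cases a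
    · exact hkey (v, false)
    · exact Iff.rfl
  obtain ⟨⟨x1, hx1⟩, ⟨x2, hx2⟩, -⟩ := h
  refine ⟨{w | (w, true) ∈ U₁}, ⟨x1.1, ?_⟩, ⟨x2.1, ?_⟩, (proj_cut_fix S hmem hU2)⟩
  · exact (hmem x1.1 x1.2).mp hx1
  · intro hc
    exact (hU2 x2).mp hx2 ((hmem x2.1 x2.2).mpr hc)

lemma cut_subset_of_proj_eq (S : SignedGraph V) {U₁ U₂ W₁ W₂ : Set (V × Bool)}
    (h : GrembanSymPartition U₁ U₂) (h' : GrembanSymPartition W₁ W₂)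
    (heq : Sym2.map Prod.fst '' cutEdges S.gremban U₁ U₂ =
           Sym2.map Prod.fst '' cutEdges S.gremban W₁ W₂) :
    cutEdges S.gremban U₁ U₂ ⊆ cutEdges S.gremban W₁ W₂ := by
  intro e he
  obtain ⟨⟨u, a⟩, ⟨v, b⟩, hadj, rfl, hx, hy⟩ := mem_cutEdges.mp he
  have hproj : Sym2.map Prod.fst s((u, a), (v, b)) ∈
      Sym2.map Prod.fst '' cutEdges S.gremban W₁ W₂ := by
    rw [← heq]; exact Set.mem_image_of_mem _ he
  obtain ⟨e', he', hmap⟩ := hproj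
  obtain ⟨⟨u₁, c⟩, ⟨v₁, d⟩, hadj', rfl, hx', hy'⟩ := mem_cutEdges.mp he'
  simp only [Sym2.map_pair_eq] at hmap
  have hEta := part_eta S h'
  obtain ⟨hG, hs⟩ := hadj
  obtain ⟨hG', hs'⟩ := hadj'
  rcases Sym2.eq_iff.mp hmap with ⟨h1, h2⟩ | ⟨h1, h2⟩
  · simp only [h1, h2] at hx' hy' hs' hG' he'
    have hcd : (a = b) ↔ (c = d) := hs.trans hs'.symm
    rcases (by revert hcd; cases a <;> cases b <;> cases c <;> cases d <;> decide :
        (a = c ∧ b = d) ∨ (a = !c ∧ b = !d)) with ⟨rfl, rfl⟩ | ⟨rfl, rfl⟩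
    · exact he'
    · rw [show s((u, !c), (v, !d)) = Sym2.map eta s((u, c), (v, d)) from by simp [eta]]
      rw [← hEta]
      exact Set.mem_image_of_mem _ he'
  · simp only [h1, h2] at hx' hy' hs' hG' he'
    have hs'' : (c = d) ↔ S.sign u v = 1 := by rwa [S.sign_symm v u] at hs'
    have hcd : (a = b) ↔ (c = d) := hs.trans hs''.symm
    rcases (by revert hcd; cases a <;> cases b <;> cases c <;> cases d <;> decide :
        (a = d ∧ b = c) ∨ (a = !d ∧ b = !c)) with ⟨ha, hb⟩ | ⟨ha, hb⟩
    · rw [ha, hb, show s((u, d), (v, c)) = s((v, c), (u, d)) from Sym2.eq_swap]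
      exact he'
    · rw [ha, hb, show s((u, !d), (v, !c)) = Sym2.map eta s((v, c), (u, d)) from by
        simp only [Sym2.map_pair_eq, eta]; exact Sym2.eq_swap]
      rw [← hEta]
      exact Set.mem_image_of_mem _ he'

lemma eta_image_fiber (A : Set V) : eta '' {x : V × Bool | x.1 ∈ A} = {x | x.1 ∈ A} := by
  ext x
  rw [himg]
  exact Iff.rfl

end Helpers

/-- For a connected signed graph `G`: the cut-set of any Gremban-symmetric bipartition
of the Gremban expansion is Gremban-symmetric; if the involution interchanges the parts,
the projected cut-set is a frustration set of `G`, and if it fixes the parts, the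
projected cut-set is a cut-set of `G`.  Conversely, projection by `π` is a bijection
between Gremban-symmetric cut-sets of `𝒢` and the cut-sets and frustration sets of `G`. -/
theorem cuts_become_cuts_or_frustration_sets {V : Type*} (S : SignedGraph V)
    (hconn : S.G.Connected) :
    (∀ U₁ U₂ : Set (V × Bool), GrembanSymPartition U₁ U₂ →
      (Sym2.map eta '' cutEdges S.gremban U₁ U₂ = cutEdges S.gremban U₁ U₂) ∧
      (eta '' U₁ = U₂ → eta '' U₂ = U₁ →
        IsFrustSet S (Sym2.map Prod.fst '' cutEdges S.gremban U₁ U₂)) ∧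
      (eta '' U₁ = U₁ → eta '' U₂ = U₂ →
        IsCutSet S (Sym2.map Prod.fst '' cutEdges S.gremban U₁ U₂))) ∧
    Set.BijOn (Set.image (Sym2.map Prod.fst)) (symCutSets S)
      {F | IsCutSet S F ∨ IsFrustSet S F} := by
  classical
  constructor
  · intro U₁ U₂ h
    refine ⟨part_eta S h, ?_, ?_⟩
    · intro h1 _; exact frust_of_swap S h h1
    · intro h1 _; exact cut_of_fix S h h1
  · refine ⟨?_, ?_, ?_⟩
    · rintro C ⟨U₁, U₂, h, rfl⟩
      rcases h.2.2.2.2 with ⟨h1, h2⟩ | ⟨h1, h2⟩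
      · exact Or.inl (cut_of_fix S h h1)
      · exact Or.inr (frust_of_swap S h h1)
    · rintro C ⟨U₁, U₂, h, rfl⟩ C' ⟨W₁, W₂, h', rfl⟩ heq
      exact Set.Subset.antisymm (cut_subset_of_proj_eq S h h' heq)
        (cut_subset_of_proj_eq S h' h heq.symm)
    · rintro F (⟨A, hA, hAc, rfl⟩ | ⟨θ, hθ, rfl⟩)
      · refine ⟨cutEdges S.gremban {x | x.1 ∈ A} {x | x.1 ∉ A},
          ⟨{x | x.1 ∈ A}, {x | x.1 ∉ A}, ?_, rfl⟩,
          proj_cut_fix S (fun v a => Iff.rfl) (fun x => Iff.rfl)⟩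
        refine ⟨⟨(hA.choose, true), hA.choose_spec⟩, ⟨(hAc.choose, true), hAc.choose_spec⟩,
          ?_, ?_, Or.inl ⟨?_, ?_⟩⟩
        · exact Set.disjoint_left.mpr fun x hx hx' => hx' hx
        · ext x; simp only [Set.mem_union, Set.mem_setOf_eq, Set.mem_univ, iff_true]
          exact em _
        · exact eta_image_fiber A
        · exact eta_image_fiber Aᶜ
      · obtain ⟨v⟩ : Nonempty V := hconn.nonempty
        set U₁ : Set (V × Bool) := {x | θ x.1 = (if x.2 then 1 else -1)} with hU₁
        have hmem : ∀ w (a : Bool), (w, a) ∈ U₁ ↔ θ w = (if a then 1 else -1) :=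
          fun _ _ => Iff.rfl
        have hv1 : U₁.Nonempty := by
          rcases hθ v with h | h
          exacts [⟨(v, true), by simp [hU₁, h]⟩, ⟨(v, false), by simp [hU₁, h]⟩]
        have hv2 : U₁ᶜ.Nonempty := by
          rcases hθ v with h | h
          · exact ⟨(v, false), by simp [hU₁, h]⟩
          · exact ⟨(v, true), by simp [hU₁, h]⟩
        have hswap : eta '' U₁ = U₁ᶜ := by
          ext ⟨w, a⟩
          rw [himg]
          show θ w = (if !a then 1 else -1) ↔ ¬ (θ w = (if a then 1 else -1))
          rcases hθ w with h | h <;> cases a <;> simp [h]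
        have hswap2 : eta '' U₁ᶜ = U₁ := by
          ext x
          rw [himg]
          have h3 : x ∈ eta '' U₁ ↔ eta x ∈ U₁ := himg U₁ x
          rw [hswap] at h3
          constructor
          · intro hx
            by_contra hx'
            exact hx (h3.mp hx')
          · intro hx hx'
            exact h3.mpr hx' hx
        exact ⟨cutEdges S.gremban U₁ U₁ᶜ,
          ⟨U₁, U₁ᶜ, ⟨hv1, hv2, disjoint_compl_right, Set.union_compl_self U₁,
            Or.inr ⟨hswap, hswap2⟩⟩, rfl⟩,
          proj_cut_swap S hθ hmem (fun x => Iff.rfl)⟩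
end

section
/- Let G be a connected signed graph with Gremban-expanded transition matrix 𝒯 = [[K⁻¹A⁺, K⁻¹A⁻],[K⁻¹A⁻, K⁻¹A⁺]]. Then G is balanced if and only if the eigenspace of 𝒯 for eigenvalue 1 is two-dimensional, spanned by the all-ones vector 𝟙 ∈ ℝ^{2n} and the antisymmetric lift (ϑ, −ϑ)ᵀ, where ϑ = (θ(1),...,θ(n)) for a switching function θ that balances G. If G is unbalanced, the eigenvalue 1 of 𝒯 is simple with eigenvector 𝟙. -/
open SignedGraph

namespace SignedGraph

variable {V : Type*} [Fintype V] [DecidableEq V]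

open Classical in
/-- The signed adjacency matrix of a signed graph. -/
noncomputable def adjMat (S : SignedGraph V) : Matrix V V ℝ :=
  fun u v => if S.G.Adj u v then (S.sign u v : ℝ) else 0

/-- The positive part `A⁺ = max(A, 0)` of the signed adjacency matrix. -/
noncomputable def adjPos (S : SignedGraph V) : Matrix V V ℝ :=
  fun u v => max (S.adjMat u v) 0

/-- The negative part `A⁻ = max(−A, 0)` of the signed adjacency matrix. -/
noncomputable def adjNeg (S : SignedGraph V) : Matrix V V ℝ :=
  fun u v => max (-S.adjMat u v) 0

/-- The Gremban adjacency matrix `𝒜 = [[A⁺, A⁻],[A⁻, A⁺]]`, which is the adjacency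
matrix of the Gremban expansion. -/
noncomputable def grembanAdj (S : SignedGraph V) : Matrix (V ⊕ V) (V ⊕ V) ℝ :=
  Matrix.fromBlocks (S.adjPos) (S.adjNeg) (S.adjNeg) (S.adjPos)

/-- A signed graph is balanced if some switching function `θ : V → {±1}` makes all edge
signs positive. -/
def BalancedSw (S : SignedGraph V) : Prop :=
  ∃ θ : V → ℤ, (∀ v, θ v = 1 ∨ θ v = -1) ∧
    ∀ u v, S.G.Adj u v → θ u * θ v * S.sign u v = 1

end SignedGraph

namespace SignedGraph

variable {V : Type*} [Fintype V] [DecidableEq V]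

/-- The (unsigned) degree of a vertex: the row sum of `Ā = A⁺ + A⁻`. -/
noncomputable def deg (S : SignedGraph V) (v : V) : ℝ :=
  ∑ w, (S.adjPos v w + S.adjNeg v w)

/-- The Gremban-expanded transition matrix
`𝒯 = 𝒦⁻¹𝒜 = [[K⁻¹A⁺, K⁻¹A⁻],[K⁻¹A⁻, K⁻¹A⁺]]`. -/
noncomputable def grembanTrans (S : SignedGraph V) : Matrix (V ⊕ V) (V ⊕ V) ℝ :=
  Matrix.diagonal (Sum.elim (fun v => (S.deg v)⁻¹) (fun v => (S.deg v)⁻¹)) *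
    S.grembanAdj

end SignedGraph

namespace SignedGraph

variable {V : Type*} [Fintype V] [DecidableEq V]

open Classical

lemma adjMat_cases (S : SignedGraph V) (v w : V) :
    (S.G.Adj v w ∧ (S.adjMat v w = 1 ∨ S.adjMat v w = -1)) ∨
      (¬ S.G.Adj v w ∧ S.adjMat v w = 0) := by
  by_cases h : S.G.Adj v w
  · rcases S.sign_pm v w h with hs | hs
    · exact Or.inl ⟨h, Or.inl (by simp [adjMat, h, hs])⟩
    · exact Or.inl ⟨h, Or.inr (by simp [adjMat, h, hs])⟩
  · exact Or.inr ⟨h, by simp [adjMat, h]⟩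

lemma absAdj (S : SignedGraph V) (v w : V) :
    S.adjPos v w + S.adjNeg v w = if S.G.Adj v w then (1:ℝ) else 0 := by
  rcases adjMat_cases S v w with ⟨h, h1 | h1⟩ | ⟨h, h1⟩ <;>
    simp [adjPos, adjNeg, h1, h] <;> norm_num

lemma abs_adjMat (S : SignedGraph V) (v w : V) :
    |S.adjMat v w| = S.adjPos v w + S.adjNeg v w := by
  rcases adjMat_cases S v w with ⟨h, h1 | h1⟩ | ⟨h, h1⟩ <;>
    simp [adjPos, adjNeg, h1, h] <;> norm_num

lemma adjMat_sub (S : SignedGraph V) (v w : V) :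
    S.adjMat v w = S.adjPos v w - S.adjNeg v w := by
  rcases adjMat_cases S v w with ⟨h, h1 | h1⟩ | ⟨h, h1⟩ <;>
    simp [adjPos, adjNeg, h1, h] <;> norm_num

lemma adjMat_symm (S : SignedGraph V) (v w : V) : S.adjMat v w = S.adjMat w v := by
  simp only [adjMat, S.sign_symm v w]
  by_cases h : S.G.Adj v w
  · simp [h, h.symm]
  · rw [if_neg h, if_neg (fun hh => h (S.G.adj_symm hh))]

lemma adjMat_adj (S : SignedGraph V) {v w : V} (h : S.G.Adj v w) :
    S.adjMat v w = (S.sign v w : ℝ) := by simp [adjMat, h]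

lemma deg_def (S : SignedGraph V) (v : V) :
    S.deg v = ∑ w, (S.adjPos v w + S.adjNeg v w) := rfl

lemma absAdj_nonneg (S : SignedGraph V) (v w : V) :
    0 ≤ S.adjPos v w + S.adjNeg v w := by
  rw [absAdj]; split <;> norm_num

/-- Maximum principle: an (unsigned) harmonic function on a connected graph is constant. -/
lemma harm_const (S : SignedGraph V) (hconn : S.G.Connected) (f : V → ℝ)
    (hf : ∀ v, S.deg v * f v = ∑ w, (S.adjPos v w + S.adjNeg v w) * f w) :
    ∃ c, ∀ v, f v = c := by
  have hne : Nonempty V := hconn.nonempty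
  obtain ⟨v0, -, hmax⟩ := Finset.exists_max_image Finset.univ f
    ⟨Classical.arbitrary V, Finset.mem_univ _⟩
  set M := f v0 with hM
  have hle : ∀ v, f v ≤ M := fun v => hmax v (Finset.mem_univ v)
  have step : ∀ v w, f v = M → S.G.Adj v w → f w = M := by
    intro v w hv hadj
    have hsum : ∑ u, (S.adjPos v u + S.adjNeg v u) * (M - f u) = 0 := by
      have h1 : ∑ u, (S.adjPos v u + S.adjNeg v u) * (M - f u)
          = (∑ u, (S.adjPos v u + S.adjNeg v u)) * M
            - ∑ u, (S.adjPos v u + S.adjNeg v u) * f u := by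
        rw [Finset.sum_mul, ← Finset.sum_sub_distrib]
        exact Finset.sum_congr rfl fun u _ => by ring
      rw [h1, ← deg_def, ← hf v, hv]
      ring
    have hterm := (Finset.sum_eq_zero_iff_of_nonneg ?_).mp hsum w (Finset.mem_univ w)
    · rw [absAdj, if_pos hadj] at hterm
      linarith [hterm]
    · intro u _
      exact mul_nonneg (absAdj_nonneg S v u) (by linarith [hle u])
  have prop : ∀ {a b : V}, S.G.Walk a b → f a = M → f b = M := by
    intro a b p
    induction p with
    | nil => exact id
    | cons h _ ih => exact fun ha => ih (step _ _ ha h)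
  exact ⟨M, fun v => prop ((hconn.preconnected v0 v).some) rfl⟩

/-- The absolute value of a signed-harmonic function is harmonic. -/
lemma sharm_abs (S : SignedGraph V) (d : V → ℝ)
    (hd : ∀ v, S.deg v * d v = ∑ w, S.adjMat v w * d w) (v : V) :
    S.deg v * |d v| = ∑ w, (S.adjPos v w + S.adjNeg v w) * |d w| := by
  have hdegnn : ∀ u, 0 ≤ S.deg u := by
    intro u
    rw [deg_def]
    exact Finset.sum_nonneg fun w _ => absAdj_nonneg S u w
  set g : V → ℝ := fun u => (∑ w, (S.adjPos u w + S.adjNeg u w) * |d w|) - S.deg u * |d u|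
    with hg
  have hgnn : ∀ u, 0 ≤ g u := by
    intro u
    have h1 : S.deg u * |d u| = |S.deg u * d u| := by
      rw [abs_mul, abs_of_nonneg (hdegnn u)]
    have h2 : |∑ w, S.adjMat u w * d w| ≤ ∑ w, (S.adjPos u w + S.adjNeg u w) * |d w| := by
      refine le_trans (Finset.abs_sum_le_sum_abs _ _) ?_
      refine Finset.sum_le_sum fun w _ => ?_
      rw [abs_mul, abs_adjMat]
    have := hd u
    simp only [hg]
    rw [← this] at h2
    linarith [h1 ▸ h2]
  have hgsum : ∑ u, g u = 0 := by
    simp only [hg]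
    rw [Finset.sum_sub_distrib]
    have h1 : ∑ u, ∑ w, (S.adjPos u w + S.adjNeg u w) * |d w| = ∑ u, S.deg u * |d u| := by
      rw [Finset.sum_comm]
      refine Finset.sum_congr rfl fun w _ => ?_
      rw [← Finset.sum_mul]
      congr 1
      rw [deg_def]
      exact Finset.sum_congr rfl fun u _ => by
        rw [← abs_adjMat, ← abs_adjMat, adjMat_symm]
    rw [h1, sub_self]
  have := (Finset.sum_eq_zero_iff_of_nonneg (fun u _ => hgnn u)).mp hgsum v (Finset.mem_univ v)
  simp only [hg] at this
  linarith [this]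

end SignedGraph


namespace SignedGraph

variable {V : Type*} [Fintype V] [DecidableEq V]

lemma grembanAdj_mulVec_inl (S : SignedGraph V) (x : V ⊕ V → ℝ) (v : V) :
    S.grembanAdj.mulVec x (Sum.inl v)
      = (∑ w, S.adjPos v w * x (Sum.inl w)) + ∑ w, S.adjNeg v w * x (Sum.inr w) := by
  simp [Matrix.mulVec, dotProduct, grembanAdj, Fintype.sum_sum_type]

lemma grembanAdj_mulVec_inr (S : SignedGraph V) (x : V ⊕ V → ℝ) (v : V) :
    S.grembanAdj.mulVec x (Sum.inr v)
      = (∑ w, S.adjNeg v w * x (Sum.inl w)) + ∑ w, S.adjPos v w * x (Sum.inr w) := by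
  simp [Matrix.mulVec, dotProduct, grembanAdj, Fintype.sum_sum_type]

lemma mem_ker_iff (S : SignedGraph V) (hdeg : ∀ v, 0 < S.deg v) (x : V ⊕ V → ℝ) :
    x ∈ LinearMap.ker ((S.grembanTrans).mulVecLin - LinearMap.id) ↔
      ∀ i, S.grembanAdj.mulVec x i = Sum.elim S.deg S.deg i * x i := by
  rw [LinearMap.mem_ker, LinearMap.sub_apply, LinearMap.id_apply,
    Matrix.mulVecLin_apply, sub_eq_zero, grembanTrans, ← Matrix.mulVec_mulVec, funext_iff]
  refine forall_congr' fun i => ?_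
  rw [Matrix.mulVec_diagonal]
  have he : Sum.elim (fun v => (S.deg v)⁻¹) (fun v => (S.deg v)⁻¹) i
      = (Sum.elim S.deg S.deg i)⁻¹ := by cases i <;> rfl
  have hpos : 0 < Sum.elim S.deg S.deg i := by cases i <;> exact hdeg _
  rw [he]
  rw [inv_mul_eq_iff_eq_mul₀ hpos.ne']

lemma ker_sym_diff (S : SignedGraph V) (hdeg : ∀ v, 0 < S.deg v) (x : V ⊕ V → ℝ)
    (hx : x ∈ LinearMap.ker ((S.grembanTrans).mulVecLin - LinearMap.id)) :
    (∀ v, S.deg v * (x (Sum.inl v) + x (Sum.inr v))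
        = ∑ w, (S.adjPos v w + S.adjNeg v w) * (x (Sum.inl w) + x (Sum.inr w))) ∧
    (∀ v, S.deg v * (x (Sum.inl v) - x (Sum.inr v))
        = ∑ w, S.adjMat v w * (x (Sum.inl w) - x (Sum.inr w))) := by
  rw [mem_ker_iff S hdeg] at hx
  constructor
  · intro v
    have h1 := hx (Sum.inl v)
    have h2 := hx (Sum.inr v)
    rw [grembanAdj_mulVec_inl] at h1
    rw [grembanAdj_mulVec_inr] at h2
    simp only [Sum.elim_inl, Sum.elim_inr] at h1 h2
    have e : ∑ w, (S.adjPos v w + S.adjNeg v w) * (x (Sum.inl w) + x (Sum.inr w))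
        = ((∑ w, S.adjPos v w * x (Sum.inl w)) + ∑ w, S.adjNeg v w * x (Sum.inr w))
          + ((∑ w, S.adjNeg v w * x (Sum.inl w)) + ∑ w, S.adjPos v w * x (Sum.inr w)) := by
      rw [← Finset.sum_add_distrib, ← Finset.sum_add_distrib, ← Finset.sum_add_distrib]
      exact Finset.sum_congr rfl fun w _ => by ring
    rw [e, h1, h2]
    ring
  · intro v
    have h1 := hx (Sum.inl v)
    have h2 := hx (Sum.inr v)
    rw [grembanAdj_mulVec_inl] at h1
    rw [grembanAdj_mulVec_inr] at h2
    simp only [Sum.elim_inl, Sum.elim_inr] at h1 h2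
    have e : ∑ w, S.adjMat v w * (x (Sum.inl w) - x (Sum.inr w))
        = ((∑ w, S.adjPos v w * x (Sum.inl w)) + ∑ w, S.adjNeg v w * x (Sum.inr w))
          - ((∑ w, S.adjNeg v w * x (Sum.inl w)) + ∑ w, S.adjPos v w * x (Sum.inr w)) := by
      rw [← Finset.sum_add_distrib, ← Finset.sum_add_distrib, ← Finset.sum_sub_distrib]
      refine Finset.sum_congr rfl fun w _ => ?_
      rw [adjMat_sub]
      ring
    rw [e, h1, h2]
    ring

lemma one_mem_ker (S : SignedGraph V) (hdeg : ∀ v, 0 < S.deg v) :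
    (1 : V ⊕ V → ℝ) ∈ LinearMap.ker ((S.grembanTrans).mulVecLin - LinearMap.id) := by
  rw [mem_ker_iff S hdeg]
  intro i
  cases i with
  | inl v =>
    rw [grembanAdj_mulVec_inl]
    simp only [Pi.one_apply, mul_one, Sum.elim_inl]
    rw [← Finset.sum_add_distrib, ← deg_def]
  | inr v =>
    rw [grembanAdj_mulVec_inr]
    simp only [Pi.one_apply, mul_one, Sum.elim_inr]
    rw [add_comm, ← Finset.sum_add_distrib, ← deg_def]

lemma theta_mem_ker (S : SignedGraph V) (hdeg : ∀ v, 0 < S.deg v) (θ : V → ℤ)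
    (hθ : ∀ v, θ v = 1 ∨ θ v = -1)
    (hsign : ∀ u v, S.G.Adj u v → S.sign u v = θ u * θ v) :
    Sum.elim (fun v => (θ v : ℝ)) (fun v => -(θ v : ℝ))
      ∈ LinearMap.ker ((S.grembanTrans).mulVecLin - LinearMap.id) := by
  rw [mem_ker_iff S hdeg]
  have key : ∀ v w, S.adjPos v w * (θ w : ℝ) + S.adjNeg v w * (-(θ w : ℝ))
      = (S.adjPos v w + S.adjNeg v w) * (θ v : ℝ) := by
    intro v w
    by_cases h : S.G.Adj v w
    · have hs := hsign v w h
      rcases hθ v with h1 | h1 <;> rcases hθ w with h2 | h2 <;>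
        rw [h1, h2] at hs ⊢ <;>
        simp [adjPos, adjNeg, adjMat, h, hs, max_def] <;> norm_num
    · simp [adjPos, adjNeg, adjMat, h]
  intro i
  cases i with
  | inl v =>
    rw [grembanAdj_mulVec_inl]
    simp only [Sum.elim_inl, Sum.elim_inr]
    rw [← Finset.sum_add_distrib, Finset.sum_congr rfl (fun w _ => key v w),
      ← Finset.sum_mul, ← deg_def]
  | inr v =>
    rw [grembanAdj_mulVec_inr]
    simp only [Sum.elim_inl, Sum.elim_inr]
    have key2 : ∀ w, S.adjNeg v w * (θ w : ℝ) + S.adjPos v w * (-(θ w : ℝ))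
        = (S.adjPos v w + S.adjNeg v w) * (-(θ v : ℝ)) := by
      intro w
      have := key v w
      ring_nf
      ring_nf at this
      linarith
    rw [← Finset.sum_add_distrib, Finset.sum_congr rfl (fun w _ => key2 w),
      ← Finset.sum_mul, ← deg_def]

lemma sign_eq_of_balanced (S : SignedGraph V) (θ : V → ℤ)
    (hθ : ∀ v, θ v = 1 ∨ θ v = -1)
    (hbal : ∀ u v, S.G.Adj u v → θ u * θ v * S.sign u v = 1) :
    ∀ u v, S.G.Adj u v → S.sign u v = θ u * θ v := by
  intro u v h
  have hb := hbal u v h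
  rcases hθ u with h1 | h1 <;> rcases hθ v with h2 | h2 <;> rw [h1, h2] at hb ⊢ <;> omega

/-- A signed-harmonic function on a connected signed graph is either zero or exhibits
a balancing switching function. -/
lemma sharm_structure (S : SignedGraph V) (hconn : S.G.Connected) (hdeg : ∀ v, 0 < S.deg v)
    (d : V → ℝ) (hd : ∀ v, S.deg v * d v = ∑ w, S.adjMat v w * d w) :
    (∀ v, d v = 0) ∨
      ∃ t : ℝ, 0 < t ∧ ∃ θ : V → ℤ, (∀ v, θ v = 1 ∨ θ v = -1) ∧
        (∀ u v, S.G.Adj u v → θ u * θ v * S.sign u v = 1) ∧ (∀ v, d v = t * (θ v : ℝ)) := by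
  have hne : Nonempty V := hconn.nonempty
  obtain ⟨t, ht⟩ := harm_const S hconn (fun v => |d v|) (sharm_abs S d hd)
  have ht0 : 0 ≤ t := (ht (Classical.arbitrary V)) ▸ abs_nonneg _
  rcases eq_or_lt_of_le ht0 with h0 | hpos
  · refine Or.inl fun v => abs_eq_zero.mp ?_
    rw [ht v, ← h0]
  · refine Or.inr ⟨t, hpos, ?_⟩
    have hdv2 : ∀ v, d v * d v = t * t := by
      intro v
      rw [← ht v]
      exact (abs_mul_abs_self _).symm
    have key : ∀ v w, S.G.Adj v w → d v * (S.adjMat v w * d w) = t * t := by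
      intro v w hadj
      have h1 : ∑ u, ((S.adjPos v u + S.adjNeg v u) * (t * t)
          - d v * (S.adjMat v u * d u)) = 0 := by
        rw [Finset.sum_sub_distrib]
        have e1 : ∑ u, (S.adjPos v u + S.adjNeg v u) * (t * t) = S.deg v * (t * t) := by
          rw [← Finset.sum_mul, ← deg_def]
        have e2 : ∑ u, d v * (S.adjMat v u * d u) = S.deg v * (t * t) := by
          rw [← Finset.mul_sum, ← hd v]
          calc d v * (S.deg v * d v) = S.deg v * (d v * d v) := by ring
          _ = S.deg v * (t * t) := by rw [hdv2 v]
        rw [e1, e2, sub_self]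
      have hterm := (Finset.sum_eq_zero_iff_of_nonneg ?_).mp h1 w (Finset.mem_univ w)
      · rw [absAdj, if_pos hadj] at hterm
        linarith [hterm]
      · intro u _
        have h2 : d v * (S.adjMat v u * d u) ≤ |d v * (S.adjMat v u * d u)| := le_abs_self _
        have h3 : |d v * (S.adjMat v u * d u)| = (S.adjPos v u + S.adjNeg v u) * (t * t) := by
          rw [abs_mul, abs_mul, ht v, ht u, abs_adjMat]
          ring
        rw [h3] at h2
        linarith
    have hcast : ∀ v, ((if 0 < d v then (1:ℤ) else -1) : ℝ) * t = d v := by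
      intro v
      rcases (abs_eq ht0).mp (ht v) with h | h
      · rw [if_pos (show 0 < d v by rw [h]; exact hpos)]
        push_cast
        rw [one_mul, h]
      · have hneg : ¬ 0 < d v := by rw [h]; linarith
        rw [if_neg hneg]
        push_cast
        rw [h]; ring
    refine ⟨fun v => if 0 < d v then 1 else -1,
      fun v => by by_cases h : 0 < d v <;> simp [h], ?_, ?_⟩
    · intro u v hadj
      have hk := key u v hadj
      rw [adjMat_adj S hadj] at hk
      have ht2 : (t * t) ≠ 0 := by positivity
      have hre : ((if 0 < d u then (1:ℤ) else -1) : ℝ)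
          * ((if 0 < d v then (1:ℤ) else -1) : ℝ) * (S.sign u v : ℝ) = 1 := by
        have h4 : (((if 0 < d u then (1:ℤ) else -1) : ℝ)
            * ((if 0 < d v then (1:ℤ) else -1) : ℝ) * (S.sign u v : ℝ) - 1) * (t * t) = 0 := by
          rw [← hcast u, ← hcast v] at hk
          linear_combination hk
        rcases mul_eq_zero.mp h4 with h5 | h5
        · linarith [h5]
        · exact absurd h5 ht2
      exact_mod_cast hre
    · intro v
      rw [← hcast v]
      by_cases h : 0 < d v <;> simp [h] <;> ring

/-- On a balanced graph, a signed-harmonic function is a multiple of the switching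
function. -/
lemma sharm_balanced (S : SignedGraph V) (hconn : S.G.Connected)
    (θ : V → ℤ) (hθ : ∀ v, θ v = 1 ∨ θ v = -1)
    (hsign : ∀ u v, S.G.Adj u v → S.sign u v = θ u * θ v)
    (d : V → ℝ) (hd : ∀ v, S.deg v * d v = ∑ w, S.adjMat v w * d w) :
    ∃ t, ∀ v, d v = t * (θ v : ℝ) := by
  have key : ∀ v w, (θ v : ℝ) * (S.adjMat v w * d w)
      = (S.adjPos v w + S.adjNeg v w) * ((θ w : ℝ) * d w) := by
    intro v w
    by_cases h : S.G.Adj v w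
    · have hA : S.adjMat v w = (θ v : ℝ) * (θ w : ℝ) := by
        rw [adjMat_adj S h, hsign v w h]
        push_cast
        ring
      rw [absAdj, if_pos h, hA]
      have hv2 : (θ v : ℝ) * (θ v : ℝ) = 1 := by
        rcases hθ v with h1 | h1 <;> rw [h1] <;> norm_num
      ring_nf
      linear_combination ((θ w : ℝ) * d w) * hv2
    · rw [absAdj, if_neg h]
      simp [adjMat, h]
  have harm : ∀ v, S.deg v * ((θ v : ℝ) * d v)
      = ∑ w, (S.adjPos v w + S.adjNeg v w) * ((θ w : ℝ) * d w) := by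
    intro v
    calc S.deg v * ((θ v : ℝ) * d v) = (θ v : ℝ) * (S.deg v * d v) := by ring
    _ = (θ v : ℝ) * ∑ w, S.adjMat v w * d w := by rw [hd v]
    _ = ∑ w, (θ v : ℝ) * (S.adjMat v w * d w) := by rw [Finset.mul_sum]
    _ = _ := Finset.sum_congr rfl fun w _ => key v w
  obtain ⟨t, ht⟩ := harm_const S hconn _ harm
  refine ⟨t, fun v => ?_⟩
  have hv := ht v
  rcases hθ v with h1 | h1 <;> rw [h1] at hv ⊢ <;> push_cast at hv ⊢ <;> linarith

end SignedGraph


/-- For a connected signed graph `G` (with positive degrees), `G` is balanced if and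
only if the eigenspace of the Gremban-expanded transition matrix `𝒯` for the eigenvalue
`1` is two-dimensional, spanned by the all-ones vector `𝟙` and the antisymmetric lift
`(ϑ, −ϑ)ᵀ` of a switching function `θ` that balances `G`.  If `G` is unbalanced, the
eigenvalue `1` is simple, with eigenspace spanned by `𝟙`. -/
theorem gremban_transition_unit_eigenspace {V : Type*} [Fintype V] [DecidableEq V]
    (S : SignedGraph V) (hconn : S.G.Connected) (hdeg : ∀ v, 0 < S.deg v) :
    (S.BalancedSw ↔
      ∃ θ : V → ℤ, (∀ v, θ v = 1 ∨ θ v = -1) ∧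
        (∀ u v, S.G.Adj u v → θ u * θ v * S.sign u v = 1) ∧
        LinearMap.ker ((S.grembanTrans).mulVecLin - LinearMap.id) =
          Submodule.span ℝ
            {(1 : V ⊕ V → ℝ),
             Sum.elim (fun v => (θ v : ℝ)) (fun v => -(θ v : ℝ))} ∧
        Module.finrank ℝ
          (LinearMap.ker ((S.grembanTrans).mulVecLin - LinearMap.id)) = 2) ∧
    (¬S.BalancedSw →
      LinearMap.ker ((S.grembanTrans).mulVecLin - LinearMap.id) =
        Submodule.span ℝ {(1 : V ⊕ V → ℝ)}) := by
  have hne : Nonempty V := hconn.nonempty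
  obtain ⟨v0⟩ := hne
  constructor
  · constructor
    · rintro ⟨θ, hθ, hbal⟩
      have hsign := SignedGraph.sign_eq_of_balanced S θ hθ hbal
      set y : V ⊕ V → ℝ := Sum.elim (fun v => (θ v : ℝ)) (fun v => -(θ v : ℝ)) with hy
      have hker : LinearMap.ker ((S.grembanTrans).mulVecLin - LinearMap.id)
          = Submodule.span ℝ {(1 : V ⊕ V → ℝ), y} := by
        refine le_antisymm (fun x hx => ?_) ?_
        · obtain ⟨hs, hdiff⟩ := SignedGraph.ker_sym_diff S hdeg x hx
          obtain ⟨c, hc⟩ := SignedGraph.harm_const S hconn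
            (fun v => x (Sum.inl v) + x (Sum.inr v)) hs
          obtain ⟨t, htt⟩ := SignedGraph.sharm_balanced S hconn θ hθ hsign
            (fun v => x (Sum.inl v) - x (Sum.inr v)) hdiff
          rw [Submodule.mem_span_pair]
          refine ⟨c / 2, t / 2, ?_⟩
          funext i
          cases i with
          | inl v =>
            have h1 := hc v
            have h2 := htt v
            simp only [hy, Pi.add_apply, Pi.smul_apply, Pi.one_apply, Sum.elim_inl,
              smul_eq_mul]
            linarith
          | inr v =>
            have h1 := hc v
            have h2 := htt v
            simp only [hy, Pi.add_apply, Pi.smul_apply, Pi.one_apply, Sum.elim_inr,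
              smul_eq_mul]
            linarith
        · rw [Submodule.span_le, Set.insert_subset_iff, Set.singleton_subset_iff]
          exact ⟨SignedGraph.one_mem_ker S hdeg,
            SignedGraph.theta_mem_ker S hdeg θ hθ hsign⟩
      refine ⟨θ, hθ, hbal, hker, ?_⟩
      rw [hker]
      have hrange : Set.range ![(1 : V ⊕ V → ℝ), y] = {(1 : V ⊕ V → ℝ), y} := by
        ext z
        simp only [Set.mem_range, Fin.exists_fin_two, Matrix.cons_val_zero,
          Matrix.cons_val_one, Matrix.head_cons, Set.mem_insert_iff, Set.mem_singleton_iff]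
        constructor
        · rintro (rfl | rfl)
          · exact Or.inl rfl
          · exact Or.inr rfl
        · rintro (rfl | rfl)
          · exact Or.inl rfl
          · exact Or.inr rfl
      have hli : LinearIndependent ℝ ![(1 : V ⊕ V → ℝ), y] := by
        rw [linearIndependent_fin2]
        constructor
        · simp only [Matrix.cons_val_one, Matrix.head_cons]
          intro h0
          have h1 := congrFun h0 (Sum.inl v0)
          simp only [hy, Matrix.cons_val_zero, Sum.elim_inl, Pi.zero_apply] at h1
          rcases hθ v0 with h2 | h2 <;> rw [h2] at h1 <;> norm_num at h1
        · intro a h0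
          simp only [Matrix.cons_val_one, Matrix.head_cons, Matrix.cons_val_zero] at h0
          have e1 := congrFun h0 (Sum.inl v0)
          have e2 := congrFun h0 (Sum.inr v0)
          simp only [hy, Pi.smul_apply, Sum.elim_inl, Sum.elim_inr, smul_eq_mul,
            Pi.one_apply] at e1 e2
          nlinarith [e1, e2]
      rw [← hrange, finrank_span_eq_card hli]
      simp
    · rintro ⟨θ, hθ, hbal, -, -⟩
      exact ⟨θ, hθ, hbal⟩
  · intro hnb
    refine le_antisymm (fun x hx => ?_) ?_
    · obtain ⟨hs, hdiff⟩ := SignedGraph.ker_sym_diff S hdeg x hx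
      obtain ⟨c, hc⟩ := SignedGraph.harm_const S hconn
        (fun v => x (Sum.inl v) + x (Sum.inr v)) hs
      rcases SignedGraph.sharm_structure S hconn hdeg
          (fun v => x (Sum.inl v) - x (Sum.inr v)) hdiff with hzero | ⟨t, ht, θ, hθ, hbal, -⟩
      · rw [Submodule.mem_span_singleton]
        refine ⟨c / 2, ?_⟩
        funext i
        cases i with
        | inl v =>
          have h1 := hc v
          have h2 := hzero v
          simp only [Pi.smul_apply, Pi.one_apply, smul_eq_mul]
          linarith
        | inr v =>
          have h1 := hc v
          have h2 := hzero v
          simp only [Pi.smul_apply, Pi.one_apply, smul_eq_mul]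
          linarith
      · exact absurd ⟨θ, hθ, hbal⟩ hnb
    · rw [Submodule.span_le, Set.singleton_subset_iff]
      exact SignedGraph.one_mem_ker S hdeg
end
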